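/- Suppose that the real part of ∫_Ω μ(x) ∑_{k=1}^d ∂_k v(x) · conj(∂_k(χ²v)(x)) dx − ω² ∫_Ω ν(x) χ(x)² |v(x)|² dx equals zero, and suppose in addition that 0 ≤ μ(x) ≤ μ⁺, 0 ≤ ν(x) ≤ ν⁺, ‖∇χ(x)‖ ≤ G and χ(x)² ≤ X² for all x ∈ Ω, where μ⁺, ν⁺, G, X are nonnegative reals. Then ∫_Ω μ(x) ∑_{k=1}^d |∂_k(χv)(x)|² dx + ω² ∫_Ω ν(x) χ(x)² |v(x)|² dx ≤ (μ⁺ G² + 2 ω² ν⁺ X²) ∫_Ω |v(x)|² dx. (This is the Caccioppoli inequality from the proof of Proposition 1: the weighted H¹-type energy of χv is controlled by the L²-norm of v.) -/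

import Mathlib

open MeasureTheory

private lemma cacc_key (c e : ℝ) (z w : ℂ) :
    (z * (starRingEnd ℂ) ((c:ℂ)^2 * z + 2 * (c:ℂ) * (e:ℂ) * w)).re
      = ‖(c:ℂ)*z + (e:ℂ)*w‖^2 - e^2 * ‖w‖^2 := by
  simp [Complex.sq_norm, Complex.normSq_apply, Complex.mul_re,
    Complex.mul_im, Complex.add_re, Complex.add_im, ← Complex.ofReal_pow]
  ring

private lemma cacc_cs {d : ℕ} (f g : Fin d → ℝ) (hf : ∀ k, 0 ≤ f k) (hg : ∀ k, 0 ≤ g k) :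
    ∑ k, f k * g k ≤ Real.sqrt (∑ k, f k ^ 2) * Real.sqrt (∑ k, g k ^ 2) := by
  have h1 : (0:ℝ) ≤ ∑ k, f k ^ 2 := Finset.sum_nonneg fun k _ => sq_nonneg _
  have h2 : (0:ℝ) ≤ ∑ k, g k ^ 2 := Finset.sum_nonneg fun k _ => sq_nonneg _
  rw [← Real.sqrt_mul h1,
    Real.le_sqrt (Finset.sum_nonneg fun k _ => mul_nonneg (hf k) (hg k)) (mul_nonneg h1 h2)]
  exact Finset.sum_mul_sq_le_sq_mul_sq Finset.univ f g

/-- Caccioppoli inequality from the proof of Proposition 1: the weighted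
H¹-type energy of `χ v` is controlled by the L²-norm of `v`.
Here `dv k` and `dχ k` denote the partial derivatives `∂ₖ v` and `∂ₖ χ`, and
by the product rule `∂ₖ(χ²v) = χ² ∂ₖ v + 2χ (∂ₖ χ) v` and
`∂ₖ(χv) = χ ∂ₖ v + (∂ₖ χ) v`. -/
theorem caccioppoli_inequality
    {d : ℕ} (hd : 1 ≤ d) (Ω : Set (Fin d → ℝ)) (hΩ : IsOpen Ω)
    (μ ν : (Fin d → ℝ) → ℝ) (hμ : Measurable μ) (hν : Measurable ν)
    (ω : ℝ) (hω : 0 < ω)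
    (v : (Fin d → ℝ) → ℂ) (dv : Fin d → (Fin d → ℝ) → ℂ)
    (χ : (Fin d → ℝ) → ℝ) (dχ : Fin d → (Fin d → ℝ) → ℝ)
    (hv : ∀ k, ∀ x ∈ Ω, HasLineDerivAt ℝ v (dv k x) x (Pi.single k 1))
    (hχ : ∀ k, ∀ x ∈ Ω, HasLineDerivAt ℝ χ (dχ k x) x (Pi.single k 1))
    (hvm : Measurable v) (hdvm : ∀ k, Measurable (dv k))
    (hχm : Measurable χ) (hdχm : ∀ k, Measurable (dχ k))
    -- integrability of μ χ² ‖∇v‖²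
    (hI1 : IntegrableOn (fun x => μ x * χ x ^ 2 * ∑ k, ‖dv k x‖ ^ 2) Ω)
    -- integrability of μ |v|² ‖∇χ‖²
    (hI2 : IntegrableOn (fun x => μ x * ‖v x‖ ^ 2 * ∑ k, dχ k x ^ 2) Ω)
    -- integrability of μ χ |v| ‖∇χ‖ ‖∇v‖
    (hI3 : IntegrableOn (fun x => μ x * χ x * ‖v x‖ *
        Real.sqrt (∑ k, dχ k x ^ 2) * Real.sqrt (∑ k, ‖dv k x‖ ^ 2)) Ω)
    -- integrability of ν χ² |v|²
    (hI4 : IntegrableOn (fun x => ν x * χ x ^ 2 * ‖v x‖ ^ 2) Ω)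
    -- integrability of |v|²
    (hI5 : IntegrableOn (fun x => ‖v x‖ ^ 2) Ω)
    -- real part of the identity b(v, χ²v) = 0
    (hb : (∫ x in Ω, (μ x : ℂ) *
            ∑ k, dv k x *
              (starRingEnd ℂ) ((χ x : ℂ) ^ 2 * dv k x +
                2 * (χ x : ℂ) * (dχ k x : ℂ) * v x)).re -
          ω ^ 2 * ∫ x in Ω, ν x * χ x ^ 2 * ‖v x‖ ^ 2 = 0)
    -- pointwise bounds on the coefficients and the cut-off
    (μp νp G X : ℝ) (hμp : 0 ≤ μp) (hνp : 0 ≤ νp) (hG : 0 ≤ G) (hX : 0 ≤ X)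
    (hμb : ∀ x ∈ Ω, 0 ≤ μ x ∧ μ x ≤ μp)
    (hνb : ∀ x ∈ Ω, 0 ≤ ν x ∧ ν x ≤ νp)
    (hGb : ∀ x ∈ Ω, Real.sqrt (∑ k, dχ k x ^ 2) ≤ G)
    (hXb : ∀ x ∈ Ω, χ x ^ 2 ≤ X ^ 2) :
    (∫ x in Ω, μ x * ∑ k, ‖(χ x : ℂ) * dv k x + (dχ k x : ℂ) * v x‖ ^ 2) +
      ω ^ 2 * ∫ x in Ω, ν x * χ x ^ 2 * ‖v x‖ ^ 2 ≤
    (μp * G ^ 2 + 2 * ω ^ 2 * νp * X ^ 2) * ∫ x in Ω, ‖v x‖ ^ 2 := by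
  have hΩm : MeasurableSet Ω := hΩ.measurableSet
  set F : (Fin d → ℝ) → ℂ := fun x => (μ x : ℂ) *
      ∑ k, dv k x * (starRingEnd ℂ) ((χ x : ℂ) ^ 2 * dv k x +
        2 * (χ x : ℂ) * (dχ k x : ℂ) * v x) with hF
  -- pointwise identity : Re (F x) = goal integrand - hI2 integrand
  have key : ∀ x, (F x).re =
      μ x * ∑ k, ‖(χ x : ℂ) * dv k x + (dχ k x : ℂ) * v x‖ ^ 2
        - μ x * ‖v x‖ ^ 2 * ∑ k, dχ k x ^ 2 := by
    intro x
    rw [hF]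
    simp only [Complex.re_ofReal_mul, Complex.re_sum]
    rw [Finset.sum_congr rfl fun k _ => cacc_key (χ x) (dχ k x) (dv k x) (v x)]
    rw [Finset.sum_sub_distrib, mul_sub]
    congr 1
    rw [Finset.mul_sum, Finset.mul_sum]
    exact Finset.sum_congr rfl fun k _ => by ring
  -- integrability of F on Ω
  have hFmeas : AEStronglyMeasurable F (volume.restrict Ω) := by
    apply Measurable.aestronglyMeasurable
    rw [hF]
    refine (Complex.measurable_ofReal.comp hμ).mul (Finset.measurable_sum _ fun k _ => ?_)
    refine (hdvm k).mul (Complex.continuous_conj.measurable.comp ?_)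
    refine Measurable.add ?_ ?_
    · exact ((Complex.measurable_ofReal.comp hχm).pow_const 2).mul (hdvm k)
    · exact ((measurable_const.mul (Complex.measurable_ofReal.comp hχm)).mul
        (Complex.measurable_ofReal.comp (hdχm k))).mul hvm
  have hFint : IntegrableOn F Ω := by
    refine Integrable.mono (hI1.add ((hI3.norm).const_mul 2)) hFmeas ?_
    filter_upwards [ae_restrict_mem hΩm] with x hx
    have hμx : 0 ≤ μ x := (hμb x hx).1
    have hS1 : (0:ℝ) ≤ ∑ k, dχ k x ^ 2 := Finset.sum_nonneg fun k _ => sq_nonneg _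
    have hS2 : (0:ℝ) ≤ ∑ k, ‖dv k x‖ ^ 2 := Finset.sum_nonneg fun k _ => sq_nonneg _
    have hcs : ∑ k, |dχ k x| * ‖dv k x‖ ≤
        Real.sqrt (∑ k, dχ k x ^ 2) * Real.sqrt (∑ k, ‖dv k x‖ ^ 2) := by
      have := cacc_cs (fun k => |dχ k x|) (fun k => ‖dv k x‖)
        (fun k => abs_nonneg _) (fun k => norm_nonneg _)
      simpa [sq_abs] using this
    have hterm : ∀ k, ‖dv k x * (starRingEnd ℂ) ((χ x : ℂ) ^ 2 * dv k x +
        2 * (χ x : ℂ) * (dχ k x : ℂ) * v x)‖ ≤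
        χ x ^ 2 * ‖dv k x‖ ^ 2 + 2 * |χ x| * (|dχ k x| * ‖dv k x‖) * ‖v x‖ := by
      intro k
      rw [norm_mul, map_add]
      calc ‖dv k x‖ * ‖(starRingEnd ℂ) ((χ x : ℂ) ^ 2 * dv k x) +
            (starRingEnd ℂ) (2 * (χ x : ℂ) * (dχ k x : ℂ) * v x)‖
          ≤ ‖dv k x‖ * (‖(χ x : ℂ) ^ 2 * dv k x‖ + ‖2 * (χ x : ℂ) * (dχ k x : ℂ) * v x‖) := by
            refine mul_le_mul_of_nonneg_left ?_ (norm_nonneg _)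
            refine le_trans (norm_add_le _ _) ?_
            rw [RingHomIsometric.norm_map, RingHomIsometric.norm_map]
        _ = χ x ^ 2 * ‖dv k x‖ ^ 2 + 2 * |χ x| * (|dχ k x| * ‖dv k x‖) * ‖v x‖ := by
            simp [norm_mul, Complex.norm_real, ← Complex.ofReal_pow,
              abs_of_nonneg (sq_nonneg (χ x))]
            ring
    have hbig : ‖F x‖ ≤ μ x * χ x ^ 2 * ∑ k, ‖dv k x‖ ^ 2 +
        2 * (μ x * |χ x| * ‖v x‖ * Real.sqrt (∑ k, dχ k x ^ 2) *
          Real.sqrt (∑ k, ‖dv k x‖ ^ 2)) := by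
      rw [hF]
      simp only [norm_mul, Complex.norm_real]
      have hstep1 : |μ x| * ‖∑ k, dv k x * (starRingEnd ℂ) ((χ x : ℂ) ^ 2 * dv k x +
            2 * (χ x : ℂ) * (dχ k x : ℂ) * v x)‖ ≤
          μ x * ∑ k, (χ x ^ 2 * ‖dv k x‖ ^ 2 +
            2 * |χ x| * (|dχ k x| * ‖dv k x‖) * ‖v x‖) := by
        rw [abs_of_nonneg hμx]
        refine mul_le_mul_of_nonneg_left ?_ hμx
        exact le_trans (norm_sum_le _ _) (Finset.sum_le_sum fun k _ => hterm k)
      refine le_trans hstep1 ?_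
      have hsum1 : ∑ k, χ x ^ 2 * ‖dv k x‖ ^ 2 = χ x ^ 2 * ∑ k, ‖dv k x‖ ^ 2 :=
        (Finset.mul_sum _ _ _).symm
      have hsum2 : ∑ k, 2 * |χ x| * (|dχ k x| * ‖dv k x‖) * ‖v x‖ =
          2 * |χ x| * ‖v x‖ * ∑ k, |dχ k x| * ‖dv k x‖ := by
        rw [Finset.mul_sum]; exact Finset.sum_congr rfl fun k _ => by ring
      rw [Finset.sum_add_distrib, hsum1, hsum2, mul_add]
      have hmono := mul_le_mul_of_nonneg_left
        (mul_le_mul_of_nonneg_left hcs (by positivity : (0:ℝ) ≤ 2 * |χ x| * ‖v x‖)) hμx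
      nlinarith [hmono]
    refine le_trans hbig ?_
    have habs : μ x * |χ x| * ‖v x‖ * Real.sqrt (∑ k, dχ k x ^ 2) *
        Real.sqrt (∑ k, ‖dv k x‖ ^ 2) =
        ‖μ x * χ x * ‖v x‖ * Real.sqrt (∑ k, dχ k x ^ 2) *
          Real.sqrt (∑ k, ‖dv k x‖ ^ 2)‖ := by
      rw [Real.norm_eq_abs, abs_mul, abs_mul, abs_mul, abs_mul,
        abs_of_nonneg hμx, abs_of_nonneg (norm_nonneg (v x)),
        abs_of_nonneg (Real.sqrt_nonneg _), abs_of_nonneg (Real.sqrt_nonneg _)]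
    rw [habs]
    exact le_abs_self _
  -- split the integral
  have hgoal_int : (∫ x in Ω, μ x * ∑ k, ‖(χ x : ℂ) * dv k x + (dχ k x : ℂ) * v x‖ ^ 2)
      = (∫ x in Ω, F x).re + ∫ x in Ω, μ x * ‖v x‖ ^ 2 * ∑ k, dχ k x ^ 2 := by
    have hre' := integral_re hFint
    simp only [RCLike.re_to_complex] at hre'
    have hre_int : IntegrableOn (fun x => (F x).re) Ω := by
      exact hFint.re
    rw [← hre', ← integral_add hre_int hI2]
    exact setIntegral_congr_fun hΩm fun x _ => by
      have := key x; linarith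
  have hre : (∫ x in Ω, F x).re = ω ^ 2 * ∫ x in Ω, ν x * χ x ^ 2 * ‖v x‖ ^ 2 := by
    linarith [hb]
  have hInn : (0:ℝ) ≤ ∫ x in Ω, ‖v x‖ ^ 2 :=
    setIntegral_nonneg hΩm fun x _ => sq_nonneg _
  have hI2b : (∫ x in Ω, μ x * ‖v x‖ ^ 2 * ∑ k, dχ k x ^ 2) ≤
      μp * G ^ 2 * ∫ x in Ω, ‖v x‖ ^ 2 := by
    rw [← integral_const_mul]
    refine setIntegral_mono_on hI2 (hI5.const_mul _) hΩm fun x hx => ?_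
    have hμx := hμb x hx
    have hGx := hGb x hx
    have hS1 : (0:ℝ) ≤ ∑ k, dχ k x ^ 2 := Finset.sum_nonneg fun k _ => sq_nonneg _
    have hsq : ∑ k, dχ k x ^ 2 ≤ G ^ 2 := by
      have h := Real.sq_sqrt hS1
      nlinarith [Real.sqrt_nonneg (∑ k, dχ k x ^ 2)]
    have h := mul_le_mul hμx.2 hsq hS1 hμp
    have h2 := mul_le_mul_of_nonneg_right h (sq_nonneg ‖v x‖)
    nlinarith [h2]
  have hI4b : (∫ x in Ω, ν x * χ x ^ 2 * ‖v x‖ ^ 2) ≤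
      νp * X ^ 2 * ∫ x in Ω, ‖v x‖ ^ 2 := by
    rw [← integral_const_mul]
    refine setIntegral_mono_on hI4 (hI5.const_mul _) hΩm fun x hx => ?_
    have hνx := hνb x hx
    have hXx := hXb x hx
    have h := mul_le_mul hνx.2 hXx (sq_nonneg (χ x)) hνp
    have h2 := mul_le_mul_of_nonneg_right h (sq_nonneg ‖v x‖)
    nlinarith [h2]
  rw [hgoal_int, hre]
  have hω2 : (0:ℝ) ≤ ω ^ 2 := sq_nonneg ω
  have h4 := mul_le_mul_of_nonneg_left hI4b hω2
  nlinarith [h4, hI2b]
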